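/- Let \alpha, \gamma, \mu, \delta, C, C_1, C_2 be positive constants. Define for t \ge 1 the sum S(t) = \sum_{k=0}^{\infty} \min\big(C e^{-\mu t},\; C_1 e^{\alpha t} e^{-\gamma k/t} + C_2 e^{-\delta k}\big). Then S(t) \to 0 as t \to \infty. -/

import Mathlib

open Filter

private lemma min_add_le (a x y : ℝ) (ha : 0 ≤ a) (hx : 0 ≤ x) (hy : 0 ≤ y) :
    min a (x + y) ≤ min a x + min a y := by
  rcases le_total a x with h | h
  · calc min a (x + y) ≤ a := min_le_left _ _
      _ = min a x + 0 := by rw [min_eq_left h, add_zero]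
      _ ≤ min a x + min a y := by gcongr; exact le_min ha hy
  · rcases le_total a y with h' | h'
    · calc min a (x + y) ≤ a := min_le_left _ _
        _ = 0 + min a y := by rw [min_eq_left h', zero_add]
        _ ≤ min a x + min a y := by gcongr; exact le_min ha hx
    · calc min a (x + y) ≤ x + y := min_le_right _ _
        _ = min a x + min a y := by rw [min_eq_right h, min_eq_right h']

private lemma min_le_rpow_mul_rpow (a x θ : ℝ) (ha : 0 < a) (hx : 0 < x)
    (hθ : 0 < θ) (hθ1 : θ < 1) : min a x ≤ a ^ (1 - θ) * x ^ θ := by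
  have hm : 0 < min a x := lt_min ha hx
  calc min a x = (min a x) ^ (1 - θ) * (min a x) ^ θ := by
        rw [← Real.rpow_add hm]; norm_num
    _ ≤ a ^ (1 - θ) * x ^ θ := by
        apply mul_le_mul
        · exact Real.rpow_le_rpow hm.le (min_le_left _ _) (by linarith)
        · exact Real.rpow_le_rpow hm.le (min_le_right _ _) hθ.le
        · positivity
        · positivity

private lemma one_sub_exp_neg_inv_le (x : ℝ) (hx : 0 < x) :
    (1 - Real.exp (-x))⁻¹ ≤ Real.exp x / x := by
  have h1 : x * Real.exp (-x) ≤ 1 - Real.exp (-x) := by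
    have := Real.add_one_le_exp x
    have hpos := Real.exp_pos (-x)
    have : Real.exp (-x) * (x + 1) ≤ Real.exp (-x) * Real.exp x := by
      apply mul_le_mul_of_nonneg_left this hpos.le
    rw [← Real.exp_add] at this
    simp at this
    nlinarith
  have h2 : 0 < x * Real.exp (-x) := by positivity
  calc (1 - Real.exp (-x))⁻¹ ≤ (x * Real.exp (-x))⁻¹ := by
        apply inv_anti₀ h2 h1
    _ = Real.exp x / x := by
        rw [Real.exp_neg, mul_inv, inv_inv, mul_comm, div_eq_mul_inv]

/-- Let `α, γ, μ, δ, C, C₁, C₂` be positive constants and for `t ≥ 1` set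
`S(t) = ∑_{k=0}^∞ min(C e^{-μt}, C₁ e^{αt} e^{-γk/t} + C₂ e^{-δk})`.
Then `S(t) → 0` as `t → ∞`. -/
theorem min_sum_tendsto_zero
    (α γ μ δ C C₁ C₂ : ℝ)
    (hα : 0 < α) (hγ : 0 < γ) (hμ : 0 < μ) (hδ : 0 < δ)
    (hC : 0 < C) (hC₁ : 0 < C₁) (hC₂ : 0 < C₂) :
    Tendsto
      (fun t : ℝ =>
        ∑' k : ℕ,
          min (C * Real.exp (-μ * t))
            (C₁ * Real.exp (α * t) * Real.exp (-γ * (k : ℝ) / t) + C₂ * Real.exp (-δ * (k : ℝ))))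
      atTop (nhds 0) := by
  set θ : ℝ := μ / (2 * (α + μ)) with hθdef
  have hθpos : 0 < θ := by positivity
  have hθlt : θ < 1 := by
    rw [hθdef, div_lt_one (by positivity)]
    nlinarith
  have hθ1 : 0 < 1 - θ := by linarith
  have hθsum : θ * (α + μ) = μ / 2 := by
    rw [hθdef]; field_simp
  -- the second geometric ratio
  set s : ℝ := Real.exp (-(θ * δ)) with hsdef
  have hs0 : 0 < s := Real.exp_pos _
  have hs1 : s < 1 := Real.exp_lt_one_iff.mpr (by nlinarith)
  have hs2 : 0 < 1 - s := by linarith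
  set K₁ : ℝ := C ^ (1 - θ) * C₁ ^ θ * Real.exp (θ * γ) / (θ * γ) with hK₁
  set K₂ : ℝ := C ^ (1 - θ) * C₂ ^ θ * (1 - s)⁻¹ with hK₂
  have hK₁pos : 0 < K₁ := by positivity
  have hK₂pos : 0 < K₂ := by positivity
  -- limit of the dominating function
  have hg : Tendsto (fun t : ℝ =>
      K₁ * (t * Real.exp (-(μ / 2) * t)) + K₂ * Real.exp (-((1 - θ) * μ) * t))
      atTop (nhds 0) := by
    have h1 : Tendsto (fun t : ℝ => t * Real.exp (-(μ / 2) * t)) atTop (nhds 0) := by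
      have hc : Tendsto (fun t : ℝ => (μ / 2) * t) atTop atTop :=
        tendsto_id.const_mul_atTop (by positivity)
      have := ((Real.tendsto_pow_mul_exp_neg_atTop_nhds_zero 1).comp hc).const_mul (2 / μ)
      simp only [mul_zero] at this
      refine this.congr fun t => ?_
      simp only [Function.comp_apply, pow_one]
      rw [neg_mul]
      field_simp
    have h2 : Tendsto (fun t : ℝ => Real.exp (-((1 - θ) * μ) * t)) atTop (nhds 0) := by
      have hc : Tendsto (fun t : ℝ => ((1 - θ) * μ) * t) atTop atTop :=
        tendsto_id.const_mul_atTop (by positivity)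
      have := Real.tendsto_exp_neg_atTop_nhds_zero.comp hc
      refine this.congr fun t => ?_
      simp [Function.comp_apply, neg_mul]
    have := (h1.const_mul K₁).add (h2.const_mul K₂)
    simpa using this
  -- squeeze
  apply tendsto_of_tendsto_of_tendsto_of_le_of_le' tendsto_const_nhds hg
  · filter_upwards with t
    exact tsum_nonneg fun k => le_min (by positivity) (by positivity)
  · filter_upwards [eventually_ge_atTop (1 : ℝ)] with t ht
    have ht0 : 0 < t := lt_of_lt_of_le one_pos ht
    set a : ℝ := C * Real.exp (-μ * t) with ha
    have ha0 : 0 < a := by positivity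
    set r : ℝ := Real.exp (-(θ * γ / t)) with hrdef
    have hr0 : 0 < r := Real.exp_pos _
    have hr1 : r < 1 := Real.exp_lt_one_iff.mpr (by
      have : 0 < θ * γ / t := by positivity
      linarith)
    set P : ℝ := a ^ (1 - θ) * (C₁ * Real.exp (α * t)) ^ θ with hP
    set Q : ℝ := a ^ (1 - θ) * C₂ ^ θ with hQ
    have hPpos : 0 < P := by positivity
    have hQpos : 0 < Q := by positivity
    -- pointwise bound
    have hpt : ∀ k : ℕ,
        min a (C₁ * Real.exp (α * t) * Real.exp (-γ * (k : ℝ) / t) + C₂ * Real.exp (-δ * (k : ℝ)))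
          ≤ P * r ^ k + Q * s ^ k := by
      intro k
      set x : ℝ := C₁ * Real.exp (α * t) * Real.exp (-γ * (k : ℝ) / t) with hxdef
      set y : ℝ := C₂ * Real.exp (-δ * (k : ℝ)) with hydef
      have hx0 : 0 < x := by positivity
      have hy0 : 0 < y := by positivity
      have step1 : min a (x + y) ≤ min a x + min a y :=
        min_add_le a x y ha0.le hx0.le hy0.le
      have step2 : min a x ≤ P * r ^ k := by
        have h := min_le_rpow_mul_rpow a x θ ha0 hx0 hθpos hθlt
        have hxθ : x ^ θ = (C₁ * Real.exp (α * t)) ^ θ * r ^ k := by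
          rw [hxdef, Real.mul_rpow (by positivity) (Real.exp_pos _).le]
          congr 1
          rw [← Real.exp_mul, hrdef, ← Real.exp_nat_mul]
          congr 1
          field_simp
        calc min a x ≤ a ^ (1 - θ) * x ^ θ := h
          _ = P * r ^ k := by rw [hxθ, hP]; ring
      have step3 : min a y ≤ Q * s ^ k := by
        have h := min_le_rpow_mul_rpow a y θ ha0 hy0 hθpos hθlt
        have hyθ : y ^ θ = C₂ ^ θ * s ^ k := by
          rw [hydef, Real.mul_rpow hC₂.le (Real.exp_pos _).le]
          congr 1
          rw [← Real.exp_mul, hsdef, ← Real.exp_nat_mul]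
          ring_nf
        calc min a y ≤ a ^ (1 - θ) * y ^ θ := h
          _ = Q * s ^ k := by rw [hyθ, hQ]; ring
      calc min a (x + y) ≤ min a x + min a y := step1
        _ ≤ P * r ^ k + Q * s ^ k := add_le_add step2 step3
    -- summability
    have hsum1 : Summable fun k : ℕ => P * r ^ k :=
      (summable_geometric_of_lt_one hr0.le hr1).mul_left P
    have hsum2 : Summable fun k : ℕ => Q * s ^ k :=
      (summable_geometric_of_lt_one hs0.le hs1).mul_left Q
    have hsumu : Summable fun k : ℕ => P * r ^ k + Q * s ^ k := hsum1.add hsum2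
    have hsumf : Summable fun k : ℕ =>
        min a (C₁ * Real.exp (α * t) * Real.exp (-γ * (k : ℝ) / t)
          + C₂ * Real.exp (-δ * (k : ℝ))) := by
      apply Summable.of_nonneg_of_le (fun k => le_min (by positivity) (by positivity)) hpt hsumu
    have htsum_le : (∑' k : ℕ,
        min a (C₁ * Real.exp (α * t) * Real.exp (-γ * (k : ℝ) / t)
          + C₂ * Real.exp (-δ * (k : ℝ))))
        ≤ P * (1 - r)⁻¹ + Q * (1 - s)⁻¹ := by
      calc (∑' k : ℕ, min a (C₁ * Real.exp (α * t) * Real.exp (-γ * (k : ℝ) / t)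
            + C₂ * Real.exp (-δ * (k : ℝ))))
          ≤ ∑' k : ℕ, (P * r ^ k + Q * s ^ k) := Summable.tsum_le_tsum hpt hsumf hsumu
        _ = P * (1 - r)⁻¹ + Q * (1 - s)⁻¹ := by
            rw [Summable.tsum_add hsum1 hsum2, tsum_mul_left, tsum_mul_left,
              tsum_geometric_of_lt_one hr0.le hr1, tsum_geometric_of_lt_one hs0.le hs1]
    -- bound P * (1-r)⁻¹
    have haθ : a ^ (1 - θ) = C ^ (1 - θ) * Real.exp (-(1 - θ) * μ * t) := by
      rw [ha, Real.mul_rpow hC.le (Real.exp_pos _).le, ← Real.exp_mul]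
      ring_nf
    have hPval : P = C ^ (1 - θ) * C₁ ^ θ * Real.exp (-(μ / 2) * t) := by
      have hexps : Real.exp (-(1 - θ) * μ * t) * Real.exp (α * t * θ)
          = Real.exp (-(μ / 2) * t) := by
        rw [← Real.exp_add]
        congr 1
        linear_combination t * hθsum
      rw [hP, haθ, Real.mul_rpow hC₁.le (Real.exp_pos _).le, ← Real.exp_mul]
      rw [show C ^ (1 - θ) * Real.exp (-(1 - θ) * μ * t) * (C₁ ^ θ * Real.exp (α * t * θ))
          = C ^ (1 - θ) * C₁ ^ θ * (Real.exp (-(1 - θ) * μ * t) * Real.exp (α * t * θ)) from by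
          ring, hexps]
    have hrbound : (1 - r)⁻¹ ≤ Real.exp (θ * γ) * t / (θ * γ) := by
      have h := one_sub_exp_neg_inv_le (θ * γ / t) (by positivity)
      rw [hrdef]
      calc (1 - Real.exp (-(θ * γ / t)))⁻¹ ≤ Real.exp (θ * γ / t) / (θ * γ / t) := h
        _ = Real.exp (θ * γ / t) * t / (θ * γ) := by
            field_simp
        _ ≤ Real.exp (θ * γ) * t / (θ * γ) := by
            have hle : θ * γ / t ≤ θ * γ := by
              rw [div_le_iff₀ ht0]
              nlinarith [mul_nonneg (mul_pos hθpos hγ).le (sub_nonneg.mpr ht)]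
            gcongr
            
    have hQval : Q * (1 - s)⁻¹ = K₂ * Real.exp (-((1 - θ) * μ) * t) := by
      rw [hQ, haθ, hK₂]
      ring_nf
    have hfinal : P * (1 - r)⁻¹ + Q * (1 - s)⁻¹
        ≤ K₁ * (t * Real.exp (-(μ / 2) * t)) + K₂ * Real.exp (-((1 - θ) * μ) * t) := by
      rw [hQval]
      gcongr ?_ + _
      calc P * (1 - r)⁻¹ ≤ P * (Real.exp (θ * γ) * t / (θ * γ)) := by
            apply mul_le_mul_of_nonneg_left hrbound hPpos.le
        _ = K₁ * (t * Real.exp (-(μ / 2) * t)) := by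
            rw [hPval, hK₁]
            field_simp
    exact le_trans htsum_le hfinal
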